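/- Let (a_n) be a sequence with 0 ≤ a_n ≤ 1 such that (1/log n) ∑_{m=1}^n a_m/m → 0 as n → ∞. Then (∏_{p ≤ p_n} (1 − 1/p)) · ∑_{m ∈ ℕ×_n} a_m/m → 0 as n → ∞, where p_n is the n-th prime and ℕ×_n is the set of positive integers all of whose prime factors are at most p_n. -/

import Mathlib

open Filter Finset

/-- The set of `p_n`-smooth positive integers, where `p_n` is the `n`-th prime. -/
def smoothNums (n : ℕ) : Set ℕ :=
  {m | 0 < m ∧ ∀ p : ℕ, p.Prime → p ∣ m → p ≤ Nat.nth Nat.Prime n}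

section SmoothHelpers

theorem cheb (y : ℕ) : ∑ p ∈ Nat.primesBelow (y+1), Real.log p ≤ y * Real.log 4 := by
  have h1 : Real.log (primorial y : ℝ) = ∑ p ∈ Nat.primesBelow (y+1), Real.log p := by
    rw [primorial, Nat.primesBelow]
    push_cast
    exact Real.log_prod (fun p hp => by
      have := (Finset.mem_filter.mp hp).2.pos; positivity)
  rw [← h1]
  calc Real.log (primorial y : ℝ) ≤ Real.log ((4:ℝ)^y) := by
        apply Real.log_le_log (by exact_mod_cast primorial_pos y)
        exact_mod_cast primorial_le_4_pow y
    _ = y * Real.log 4 := by rw [Real.log_pow]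

theorem telesc (m n : ℕ) (h : m ≤ n) :
    ∑ k ∈ Ico m n, (1/(k:ℝ) - 1/((k:ℝ)+1)) = 1/(m:ℝ) - 1/(n:ℝ) := by
  have key : ∀ N : ℕ, ∑ k ∈ range N, (1/(k:ℝ) - 1/((k:ℝ)+1)) = 1/((0:ℕ):ℝ) - 1/(N:ℝ) := by
    intro N
    have := Finset.sum_range_sub' (f := fun k : ℕ => 1/(k:ℝ)) N
    push_cast at this
    simpa using this
  rw [Finset.sum_Ico_eq_sub _ h, key n, key m]
  simp only [Nat.cast_zero]
  rw [one_div (0:ℝ), inv_zero]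
  ring

theorem chebsum (y : ℕ) (hy : 2 ≤ y) :
    ∑ p ∈ Nat.primesBelow (y+1), Real.log p / p ≤ Real.log 4 * (Real.log y + 2) := by
  have hlog4 : (0:ℝ) ≤ Real.log 4 := Real.log_nonneg (by norm_num)
  have htel : ∀ p ∈ Nat.primesBelow (y+1),
      Real.log p / p = Real.log p * (1/y) + ∑ k ∈ Ico p y, Real.log p * (1/(k:ℝ) - 1/((k:ℝ)+1)) := by
    intro p hp
    have hpy : p ≤ y := Nat.lt_succ_iff.mp (Nat.lt_of_mem_primesBelow hp)
    have hp0 : (0:ℝ) < p := by exact_mod_cast (Nat.prime_of_mem_primesBelow hp).pos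
    have hy0 : (0:ℝ) < y := by positivity
    rw [← Finset.mul_sum, telesc p y hpy]
    field_simp
    ring
  rw [Finset.sum_congr rfl htel, Finset.sum_add_distrib]
  have hswap : ∑ p ∈ Nat.primesBelow (y+1), ∑ k ∈ Ico p y, Real.log p * (1/(k:ℝ) - 1/((k:ℝ)+1))
      = ∑ k ∈ range y, ∑ p ∈ Nat.primesBelow (k+1), Real.log p * (1/(k:ℝ) - 1/((k:ℝ)+1)) := by
    apply Finset.sum_comm'
    intro p k
    simp only [Nat.mem_primesBelow, Finset.mem_Ico, Finset.mem_range]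
    constructor
    · rintro ⟨⟨-, hp⟩, h1, h2⟩; exact ⟨⟨by omega, hp⟩, h2⟩
    · rintro ⟨⟨h1, hp⟩, h2⟩; exact ⟨⟨by omega, hp⟩, by omega, h2⟩
  rw [hswap]
  have h1 : ∑ p ∈ Nat.primesBelow (y+1), Real.log p * (1/y) ≤ Real.log 4 := by
    rw [← Finset.sum_mul]
    have hy0 : (0:ℝ) < y := by positivity
    calc (∑ p ∈ Nat.primesBelow (y+1), Real.log p) * (1/y) ≤ (y * Real.log 4) * (1/y) := by
          apply mul_le_mul_of_nonneg_right (cheb y); positivity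
      _ = Real.log 4 := by field_simp
  have h2 : ∑ k ∈ range y, ∑ p ∈ Nat.primesBelow (k+1), Real.log p * (1/(k:ℝ) - 1/((k:ℝ)+1))
      ≤ Real.log 4 * (1 + Real.log y) := by
    calc ∑ k ∈ range y, ∑ p ∈ Nat.primesBelow (k+1), Real.log p * (1/(k:ℝ) - 1/((k:ℝ)+1))
        ≤ ∑ k ∈ range y, Real.log 4 * (1/((k:ℝ)+1)) := by
          apply Finset.sum_le_sum
          intro k _
          rcases Nat.eq_zero_or_pos k with hk | hk
          · subst hk
            have : Nat.primesBelow 1 = ∅ := by decide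
            simp [this]
            positivity
          · rw [← Finset.sum_mul]
            have hk0 : (0:ℝ) < k := by exact_mod_cast hk
            have hd : (1/(k:ℝ) - 1/((k:ℝ)+1)) = 1/((k:ℝ)*((k:ℝ)+1)) := by
              field_simp
              ring
            rw [hd]
            have hθ : ∑ p ∈ Nat.primesBelow (k+1), Real.log p ≤ k * Real.log 4 := cheb k
            calc (∑ p ∈ Nat.primesBelow (k+1), Real.log p) * (1/((k:ℝ)*((k:ℝ)+1)))
                ≤ ((k:ℝ) * Real.log 4) * (1/((k:ℝ)*((k:ℝ)+1))) := by
                  apply mul_le_mul_of_nonneg_right hθ; positivity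
              _ = Real.log 4 * (1/((k:ℝ)+1)) := by
                  field_simp
      _ = Real.log 4 * ∑ k ∈ range y, (1/((k:ℝ)+1)) := by rw [Finset.mul_sum]
      _ ≤ Real.log 4 * (1 + Real.log y) := by
          apply mul_le_mul_of_nonneg_left _ hlog4
          have hh : ∑ k ∈ range y, (1/((k:ℝ)+1)) = ((harmonic y : ℚ) : ℝ) := by
            rw [harmonic]; push_cast; simp [one_div]
          rw [hh]
          exact harmonic_le_one_add_log y
  linarith

noncomputable def natRpow (c : ℝ) : ℕ →* ℝ where
  toFun m := (m:ℝ) ^ c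
  map_one' := by simp
  map_mul' m n := by push_cast; exact Real.mul_rpow (by positivity) (by positivity)

lemma natRpow_apply (c : ℝ) (m : ℕ) : natRpow c m = (m:ℝ) ^ c := rfl

lemma natRpow_prime_lt_one {c : ℝ} (hc : c < 0) {p : ℕ} (hp : p.Prime) :
    ‖natRpow c p‖ < 1 := by
  rw [natRpow_apply, Real.norm_eq_abs, abs_of_nonneg (Real.rpow_nonneg (by positivity) c)]
  exact Real.rpow_lt_one_of_one_lt_of_neg (by exact_mod_cast hp.one_lt) hc

lemma euler_summable {c : ℝ} (hc : c < 0) (N : ℕ) :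
    Summable ((Nat.smoothNumbers N).indicator (fun m => (m:ℝ) ^ c)) := by
  have := (EulerProduct.summable_and_hasSum_smoothNumbers_prod_primesBelow_geometric
    (f := natRpow c) (fun hp => natRpow_prime_lt_one hc hp) N).1
  have h2 : Summable (fun m : Nat.smoothNumbers N => (m:ℝ) ^ c) := by
    refine this.of_norm
  rwa [← summable_subtype_iff_indicator]

lemma euler_tsum {c : ℝ} (hc : c < 0) (N : ℕ) :
    ∑' m, (Nat.smoothNumbers N).indicator (fun m => (m:ℝ) ^ c) m
      = ∏ p ∈ N.primesBelow, (1 - (p:ℝ) ^ c)⁻¹ := by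
  rw [← _root_.tsum_subtype]
  exact (EulerProduct.summable_and_hasSum_smoothNumbers_prod_primesBelow_geometric
    (f := natRpow c) (fun hp => natRpow_prime_lt_one hc hp) N).2.tsum_eq

lemma one_sub_pos_of_prime {p : ℕ} (hp : p.Prime) {c : ℝ} (hc : c < 0) :
    0 < 1 - (p:ℝ) ^ c := by
  have : (p:ℝ) ^ c < 1 :=
    Real.rpow_lt_one_of_one_lt_of_neg (by exact_mod_cast hp.one_lt) hc
  linarith

lemma prod_mul_inv_prod {c : ℝ} (hc : c < 0) (N : ℕ) :
    (∏ p ∈ N.primesBelow, (1 - (p:ℝ) ^ c)) * (∏ p ∈ N.primesBelow, (1 - (p:ℝ) ^ c)⁻¹) = 1 := by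
  rw [← Finset.prod_mul_distrib]
  apply Finset.prod_eq_one
  intro p hp
  exact mul_inv_cancel₀ (ne_of_gt (one_sub_pos_of_prime (Nat.prime_of_mem_primesBelow hp) hc))

lemma mem_smooth_of_le {m y : ℕ} (h1 : 1 ≤ m) (h2 : m ≤ y) : m ∈ Nat.smoothNumbers (y+1) := by
  rw [Nat.mem_smoothNumbers']
  intro p hp hpm
  have := Nat.le_of_dvd (by omega) hpm
  omega

lemma PnL_le_one {y : ℕ} (hy : 2 ≤ y) :
    (∏ p ∈ Nat.primesBelow (y+1), (1 - 1/(p:ℝ))) * Real.log y ≤ 1 := by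
  have hc : (-1 : ℝ) < 0 := by norm_num
  have hrw : ∀ p ∈ Nat.primesBelow (y+1), (1 - 1/(p:ℝ)) = 1 - (p:ℝ) ^ (-1:ℝ) := by
    intro p hp
    rw [Real.rpow_neg_one, one_div]
  rw [Finset.prod_congr rfl hrw]
  have hPn0 : 0 ≤ ∏ p ∈ Nat.primesBelow (y+1), (1 - (p:ℝ) ^ (-1:ℝ)) :=
    Finset.prod_nonneg fun p hp =>
      (one_sub_pos_of_prime (Nat.prime_of_mem_primesBelow hp) hc).le
  have hlog : Real.log y ≤ ∑' m, (Nat.smoothNumbers (y+1)).indicator (fun m => (m:ℝ) ^ (-1:ℝ)) m := by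
    have h1 : Real.log y ≤ ((harmonic y : ℚ) : ℝ) := by
      calc Real.log y ≤ Real.log (y+1) := Real.log_le_log (by positivity) (by linarith)
        _ ≤ _ := by exact_mod_cast log_add_one_le_harmonic y
    have h2 : ((harmonic y : ℚ) : ℝ)
        = ∑ m ∈ Finset.Icc 1 y, (Nat.smoothNumbers (y+1)).indicator (fun m => (m:ℝ) ^ (-1:ℝ)) m := by
      rw [harmonic_eq_sum_Icc]
      push_cast
      apply Finset.sum_congr rfl
      intro m hm
      rw [Finset.mem_Icc] at hm
      rw [Set.indicator_of_mem (mem_smooth_of_le hm.1 hm.2), Real.rpow_neg_one]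
    refine h1.trans (h2.le.trans ?_)
    apply Summable.sum_le_tsum
    · intro m _
      apply Set.indicator_nonneg
      intro m' _
      positivity
    · exact euler_summable hc (y+1)
  calc (∏ p ∈ Nat.primesBelow (y+1), (1 - (p:ℝ) ^ (-1:ℝ))) * Real.log y
      ≤ (∏ p ∈ Nat.primesBelow (y+1), (1 - (p:ℝ) ^ (-1:ℝ)))
        * ∑' m, (Nat.smoothNumbers (y+1)).indicator (fun m => (m:ℝ) ^ (-1:ℝ)) m :=
        mul_le_mul_of_nonneg_left hlog hPn0
    _ = 1 := by rw [euler_tsum hc (y+1)]; exact prod_mul_inv_prod hc (y+1)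

lemma exp_one_sub_le (x : ℝ) : Real.exp x * (1-x) ≤ 1 := by
  have hmul : Real.exp x * Real.exp (-x) = 1 := by rw [← Real.exp_add]; simp
  nlinarith [Real.add_one_le_exp (-x), Real.exp_pos x]

lemma log32eq : Real.log 32 = 5 * Real.log 2 := by
  rw [show (32:ℝ) = 2^(5:ℕ) by norm_num, Real.log_pow]; norm_num

lemma factor_bound {y p : ℕ} (hy : 32 ≤ y) (hp : p.Prime) (hpy : p ≤ y) :
    (p:ℝ) ^ ((Real.log y)⁻¹ - 1) ≤ 2/3 ∧
    1 - 1/(p:ℝ) ≤ (1 - (p:ℝ)^((Real.log y)⁻¹-1))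
        * Real.exp (9 * (Real.log y)⁻¹ * Real.log p / p) := by
  set L : ℝ := Real.log y with hL
  have hl2 : (0.6931471803:ℝ) < Real.log 2 := Real.log_two_gt_d9
  have hL5 : 5 * Real.log 2 ≤ L := by
    rw [← log32eq]; exact Real.log_le_log (by norm_num) (by exact_mod_cast hy)
  have hL3 : 3 ≤ L := by linarith
  have hL0 : 0 < L := by linarith
  have hq2 : (2:ℝ) ≤ (p:ℝ) := by exact_mod_cast hp.two_le
  have hq0 : (0:ℝ) < (p:ℝ) := by linarith
  have hlogq : Real.log p ≤ L := Real.log_le_log hq0 (by exact_mod_cast hpy)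
  have hlogq0 : 0 ≤ Real.log p := Real.log_nonneg (by linarith)
  set x : ℝ := L⁻¹ * Real.log p with hx
  set w : ℝ := Real.exp x with hw
  have hw0 : 0 < w := Real.exp_pos x
  have hx0 : 0 ≤ x := by positivity
  have hx1 : x ≤ 1 := by
    rw [hx, inv_mul_le_iff₀ hL0]; linarith
  have hrpow : (p:ℝ) ^ ((L:ℝ)⁻¹ - 1) = w / p := by
    rw [Real.rpow_sub hq0, Real.rpow_one, Real.rpow_def_of_pos hq0, hw, hx]
    ring_nf
  have hw3 : w ≤ 3 := by
    calc w ≤ Real.exp 1 := Real.exp_le_exp.mpr hx1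
      _ ≤ 3 := by linarith [Real.exp_one_lt_d9]
  -- part (a)
  have hkey : w / (p:ℝ) ≤ 2/3 := by
    rw [div_le_iff₀ hq0]
    rcases show p = 2 ∨ p = 3 ∨ 5 ≤ p by
        have hp2n : 2 ≤ p := hp.two_le
        rcases Nat.lt_or_ge p 5 with h5 | h5
        · interval_cases p
          · left; rfl
          · right; left; rfl
          · exact absurd hp (by norm_num)
        · right; right; exact h5
      with h | h | h
    · -- p = 2 : x ≤ 1/5, w ≤ 5/4 ≤ 4/3
      subst h
      have hx5 : x ≤ 1/5 := by
        rw [hx]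
        have hinv : L⁻¹ ≤ (5 * Real.log 2)⁻¹ := by
          apply inv_anti₀ (by linarith) hL5
        calc L⁻¹ * Real.log 2 ≤ (5 * Real.log 2)⁻¹ * Real.log 2 := by
              apply mul_le_mul_of_nonneg_right hinv (by linarith)
          _ = 1/5 := by field_simp
      have := exp_one_sub_le x
      push_cast
      nlinarith
    · -- p = 3 : x ≤ 2/5, w ≤ 5/3 ≤ 2
      subst h
      have hlog3 : Real.log 3 ≤ 2 * Real.log 2 := by
        rw [show (2:ℝ) * Real.log 2 = Real.log (2^(2:ℕ)) by rw [Real.log_pow]; norm_num]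
        exact Real.log_le_log (by norm_num) (by norm_num)
      have hx5 : x ≤ 2/5 := by
        rw [hx]
        have hinv : L⁻¹ ≤ (5 * Real.log 2)⁻¹ := by
          apply inv_anti₀ (by linarith) hL5
        calc L⁻¹ * Real.log 3 ≤ (5 * Real.log 2)⁻¹ * (2 * Real.log 2) := by
              apply mul_le_mul hinv hlog3 (by positivity) (by positivity)
          _ = 2/5 := by field_simp
      have := exp_one_sub_le x
      push_cast
      nlinarith
    · -- p ≥ 5 : w ≤ e < 10/3
      have h5 : (5:ℝ) ≤ (p:ℝ) := by exact_mod_cast h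
      have : w ≤ Real.exp 1 := Real.exp_le_exp.mpr hx1
      nlinarith [Real.exp_one_lt_d9]
  refine ⟨by rw [hrpow]; exact hkey, ?_⟩
  -- part (b)
  rw [hrpow]
  have hw1 : w - 1 ≤ 3 * x := by
    have h1 := exp_one_sub_le x
    nlinarith
  have hqw3 : (p:ℝ)/3 ≤ (p:ℝ) - w := by
    rw [div_le_iff₀ hq0] at hkey
    linarith
  have hteq : 9 * (L:ℝ)⁻¹ * Real.log p / p = 9 * x / p := by rw [hx]; ring
  rw [hteq]
  have h13 : (1:ℝ)/3 ≤ 1 - w/(p:ℝ) := by linarith [hkey]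
  have hE : 1 + 9*x/(p:ℝ) ≤ Real.exp (9*x/(p:ℝ)) := by
    linarith [Real.add_one_le_exp (9*x/(p:ℝ))]
  have step1 : (1 - w/(p:ℝ)) * (1 + 9*x/(p:ℝ)) ≤ (1 - w/(p:ℝ)) * Real.exp (9*x/(p:ℝ)) :=
    mul_le_mul_of_nonneg_left hE (by linarith)
  have e1 : (1 - w/(p:ℝ)) * (1 + 9*x/(p:ℝ)) - (1 - 1/(p:ℝ))
      = (9*x*((p:ℝ) - w) - (w - 1)*(p:ℝ))/(p:ℝ)^2 := by
    field_simp
    ring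
  have e2 : 0 ≤ (9*x*((p:ℝ) - w) - (w - 1)*(p:ℝ))/(p:ℝ)^2 := by
    apply div_nonneg _ (by positivity)
    nlinarith [mul_le_mul_of_nonneg_right hw1 hq0.le,
      mul_le_mul_of_nonneg_left hqw3 (by positivity : (0:ℝ) ≤ 9*x)]
  linarith

lemma prod_bound {y : ℕ} (hy : 32 ≤ y) :
    ∏ p ∈ Nat.primesBelow (y+1), (1 - 1/(p:ℝ))
      ≤ Real.exp 26 * ∏ p ∈ Nat.primesBelow (y+1), (1 - (p:ℝ)^((Real.log y)⁻¹ - 1)) := by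
  have hL3 : (3:ℝ) ≤ Real.log y := by
    calc (3:ℝ) ≤ Real.log 32 := by
          rw [show (32:ℝ) = 2^(5:ℕ) by norm_num, Real.log_pow]
          push_cast
          linarith [Real.log_two_gt_d9]
      _ ≤ Real.log y := Real.log_le_log (by norm_num) (by exact_mod_cast hy)
  have step1 : ∏ p ∈ Nat.primesBelow (y+1), (1 - 1/(p:ℝ))
      ≤ ∏ p ∈ Nat.primesBelow (y+1), ((1 - (p:ℝ)^((Real.log y)⁻¹ - 1))
          * Real.exp (9 * (Real.log y)⁻¹ * Real.log p / p)) := by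
    apply Finset.prod_le_prod
    · intro p hp
      have h2 : (2:ℝ) ≤ (p:ℝ) := by exact_mod_cast (Nat.prime_of_mem_primesBelow hp).two_le
      have : 1/(p:ℝ) ≤ 1 := by rw [div_le_one (by linarith)]; linarith
      linarith
    · intro p hp
      exact (factor_bound hy (Nat.prime_of_mem_primesBelow hp)
        (Nat.lt_succ_iff.mp (Nat.lt_of_mem_primesBelow hp))).2
  rw [Finset.prod_mul_distrib, ← Real.exp_sum, mul_comm] at step1
  refine step1.trans (mul_le_mul_of_nonneg_right (Real.exp_le_exp.mpr ?_) ?_)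
  · -- sum of exponents ≤ 26
    have e1 : ∑ p ∈ Nat.primesBelow (y+1), 9 * (Real.log y)⁻¹ * Real.log p / p
        = 9 * (Real.log y)⁻¹ * ∑ p ∈ Nat.primesBelow (y+1), Real.log p / p := by
      rw [Finset.mul_sum]; apply Finset.sum_congr rfl; intro p _; ring
    rw [e1]
    have hcs := chebsum y (by omega)
    have hσ : (0:ℝ) < (Real.log y)⁻¹ := by positivity
    calc 9 * (Real.log y)⁻¹ * ∑ p ∈ Nat.primesBelow (y+1), Real.log p / p
        ≤ 9 * (Real.log y)⁻¹ * (Real.log 4 * (Real.log y + 2)) := by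
          apply mul_le_mul_of_nonneg_left hcs (by positivity)
      _ ≤ 26 := by
          have hlog4 : Real.log 4 = 2 * Real.log 2 := by
            rw [show (4:ℝ) = 2^(2:ℕ) by norm_num, Real.log_pow]; norm_num
          have hl2 : Real.log 2 < 0.6931471808 := Real.log_two_lt_d9
          have hl2' : 0 < Real.log 2 := by linarith [Real.log_two_gt_d9]
          have hinv : (Real.log y)⁻¹ ≤ 1/3 := by
            rw [inv_le_comm₀ (by linarith) (by norm_num)]
            linarith
          have h2L : (Real.log y)⁻¹ * (Real.log y + 2) ≤ 5/3 := by
            have : (Real.log y)⁻¹ * (Real.log y + 2) = 1 + 2 * (Real.log y)⁻¹ := by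
              field_simp
            rw [this]; linarith
          calc 9 * (Real.log y)⁻¹ * (Real.log 4 * (Real.log y + 2))
              = 9 * Real.log 4 * ((Real.log y)⁻¹ * (Real.log y + 2)) := by ring
            _ ≤ 9 * Real.log 4 * (5/3) := by
                apply mul_le_mul_of_nonneg_left h2L (by rw [hlog4]; positivity)
            _ ≤ 26 := by rw [hlog4]; linarith
  · -- product nonneg
    apply Finset.prod_nonneg
    intro p hp
    have := (factor_bound hy (Nat.prime_of_mem_primesBelow hp)
      (Nat.lt_succ_iff.mp (Nat.lt_of_mem_primesBelow hp))).1
    linarith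

lemma main_est (a : ℕ → ℝ) (ha : ∀ m, 0 ≤ a m ∧ a m ≤ 1) {u : ℝ} (hu : 1 ≤ u)
    {y : ℕ} (hy : 32 ≤ y) :
    (∏ p ∈ Nat.primesBelow (y+1), (1 - 1/(p:ℝ)))
      * (∑' m, (Nat.smoothNumbers (y+1)).indicator (fun m => a m / m) m)
    ≤ u * ((1/Real.log (⌊Real.exp (u * Real.log y)⌋₊ : ℕ))
          * ∑ m ∈ Finset.Icc 1 ⌊Real.exp (u * Real.log y)⌋₊, a m / m)
      + Real.exp 26 * Real.exp (-u) := by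
  set L : ℝ := Real.log y with hLdef
  have hL3 : (3:ℝ) ≤ L := by
    calc (3:ℝ) ≤ Real.log 32 := by
          rw [show (32:ℝ) = 2^(5:ℕ) by norm_num, Real.log_pow]
          push_cast
          linarith [Real.log_two_gt_d9]
      _ ≤ L := Real.log_le_log (by norm_num) (by exact_mod_cast hy)
  have hL0 : (0:ℝ) < L := by linarith
  set σ : ℝ := L⁻¹ with hσdef
  have hσ0 : 0 < σ := by positivity
  have hσ3 : σ ≤ 1/3 := by
    rw [hσdef, inv_le_comm₀ hL0 (by norm_num)]
    linarith
  have hc : σ - 1 < 0 := by linarith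
  set X : ℝ := Real.exp (u * L) with hXdef
  set M : ℕ := ⌊X⌋₊ with hMdef
  have hyX : (y:ℝ) ≤ X := by
    rw [hXdef]
    calc (y:ℝ) = Real.exp L := by
          rw [hLdef, Real.exp_log (by positivity)]
      _ ≤ Real.exp (u * L) := Real.exp_le_exp.mpr (by nlinarith)
  have hyM : y ≤ M := Nat.le_floor hyX
  have hM32 : 32 ≤ M := le_trans hy hyM
  have hlogM : Real.log M ≤ u * L := by
    rw [← Real.log_exp (u * L)]
    apply Real.log_le_log (by exact_mod_cast (by omega : 0 < M))
    exact (Nat.floor_le (by positivity)).trans (le_of_eq rfl)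
  have hlogM0 : (0:ℝ) < Real.log M :=
    Real.log_pos (by exact_mod_cast (by omega : 1 < M))
  set Pn : ℝ := ∏ p ∈ Nat.primesBelow (y+1), (1 - 1/(p:ℝ)) with hPdef
  have hPn0 : 0 ≤ Pn := by
    apply Finset.prod_nonneg
    intro p hp
    have h2 : (2:ℝ) ≤ (p:ℝ) := by exact_mod_cast (Nat.prime_of_mem_primesBelow hp).two_le
    have : 1/(p:ℝ) ≤ 1 := by rw [div_le_one (by linarith)]; linarith
    linarith
  -- the three functions
  set g : ℕ → ℝ := (Nat.smoothNumbers (y+1)).indicator (fun m => a m / m) with hgdef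
  set g1 : ℕ → ℝ := fun m => if m ∈ Finset.Icc 1 M then a m / m else 0 with hg1def
  set g2 : ℕ → ℝ := (Nat.smoothNumbers (y+1)).indicator
      (fun m => if M < m then Real.exp (-u) * (m:ℝ)^(σ-1) else 0) with hg2def
  have hg1nonneg : ∀ m, 0 ≤ g1 m := by
    intro m
    rw [hg1def]
    dsimp only
    split
    · exact div_nonneg (ha m).1 (Nat.cast_nonneg m)
    · exact le_refl 0
  have hg2nonneg : ∀ m, 0 ≤ g2 m := by
    intro m
    apply Set.indicator_nonneg
    intro m' _
    split
    · positivity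
    · exact le_refl 0
  have hgnonneg : ∀ m, 0 ≤ g m := by
    intro m
    apply Set.indicator_nonneg
    intro m' hm'
    have : 0 < m' := Nat.pos_of_ne_zero hm'.1
    exact div_nonneg (ha m').1 (Nat.cast_nonneg m')
  -- pointwise bound
  have hg_le : ∀ m, g m ≤ g1 m + g2 m := by
    intro m
    by_cases hm : m ∈ Nat.smoothNumbers (y+1)
    · have hm1 : 1 ≤ m := Nat.pos_of_ne_zero hm.1
      have hm0 : (0:ℝ) < m := by exact_mod_cast hm1
      rw [hgdef, Set.indicator_of_mem hm, hg2def, Set.indicator_of_mem hm]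
      by_cases hmM : m ≤ M
      · simp only [hg1def]
        rw [if_pos (Finset.mem_Icc.mpr ⟨hm1, hmM⟩), if_neg (by omega)]
        simp
      · push_neg at hmM
        simp only [hg1def]
        rw [if_neg (by simp [Finset.mem_Icc]; omega), if_pos hmM]
        have hXm : X ≤ (m:ℝ) := by
          calc X ≤ (M:ℝ) + 1 := by
                have := Nat.lt_floor_add_one X
                rw [← hMdef] at this
                linarith
            _ ≤ (m:ℝ) := by exact_mod_cast hmM
        have key : a m / m ≤ Real.exp (-u) * (m:ℝ)^(σ-1) := by
          have h1 : a m / m ≤ 1 / m := by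
            gcongr
            exact (ha m).2
          have h2 : (1:ℝ)/m = (m:ℝ)^(σ-1) * (m:ℝ)^(-σ) := by
            rw [← Real.rpow_add hm0, show σ - 1 + -σ = -1 by ring, Real.rpow_neg_one, one_div]
          have h3 : (m:ℝ)^(-σ) ≤ Real.exp (-u) := by
            rw [Real.rpow_def_of_pos hm0]
            apply Real.exp_le_exp.mpr
            have hlogm : u * L ≤ Real.log m := by
              have := Real.log_le_log (by positivity : (0:ℝ) < X) hXm
              rwa [hXdef, Real.log_exp] at this
            have hLσ : L * σ = 1 := by rw [hσdef]; field_simp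
            calc Real.log m * -σ ≤ (u * L) * -σ := by nlinarith
              _ = -u := by nlinarith [hLσ]
          calc a m / m ≤ 1/m := h1
            _ = (m:ℝ)^(σ-1) * (m:ℝ)^(-σ) := h2
            _ ≤ (m:ℝ)^(σ-1) * Real.exp (-u) := by
                apply mul_le_mul_of_nonneg_left h3 (Real.rpow_nonneg (by positivity) _)
            _ = Real.exp (-u) * (m:ℝ)^(σ-1) := by ring
        linarith [key]
    · rw [hgdef, Set.indicator_of_notMem hm, hg2def, Set.indicator_of_notMem hm]
      have := hg1nonneg m
      linarith
  -- summability
  have hsum_ind : ∀ c : ℝ, c < 0 → Summable ((Nat.smoothNumbers (y+1)).indicator (fun m => (m:ℝ) ^ c)) :=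
    fun c hc' => euler_summable hc' (y+1)
  have hsum_g : Summable g := by
    apply Summable.of_nonneg_of_le hgnonneg ?_ (hsum_ind (-1) (by norm_num))
    intro m
    rw [hgdef]
    by_cases hm : m ∈ Nat.smoothNumbers (y+1)
    · rw [Set.indicator_of_mem hm, Set.indicator_of_mem hm]
      have hm0 : (0:ℝ) < m := by exact_mod_cast Nat.pos_of_ne_zero hm.1
      rw [Real.rpow_neg_one]
      rw [div_le_iff₀ hm0]
      rw [inv_mul_cancel₀ (ne_of_gt hm0)]
      exact (ha m).2
    · rw [Set.indicator_of_notMem hm, Set.indicator_of_notMem hm]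
  have hsum_g1 : Summable g1 := by
    apply summable_of_ne_finset_zero (s := Finset.Icc 1 M)
    intro m hm
    rw [hg1def]
    exact if_neg hm
  have hg2_le : ∀ m, g2 m ≤ Real.exp (-u) * (Nat.smoothNumbers (y+1)).indicator (fun m => (m:ℝ) ^ (σ-1)) m := by
    intro m
    by_cases hm : m ∈ Nat.smoothNumbers (y+1)
    · simp only [hg2def, Set.indicator_of_mem hm]
      split
      · exact le_refl _
      · positivity
    · rw [hg2def, Set.indicator_of_notMem hm, Set.indicator_of_notMem hm]
      simp
  have hsum_g2 : Summable g2 := by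
    apply Summable.of_nonneg_of_le hg2nonneg hg2_le
    exact (hsum_ind (σ-1) hc).mul_left _
  -- tsum bounds
  have t1 : ∑' m, g1 m = ∑ m ∈ Finset.Icc 1 M, a m / m := by
    rw [tsum_eq_sum (s := Finset.Icc 1 M) (fun b hb => by rw [hg1def]; exact if_neg hb)]
    apply Finset.sum_congr rfl
    intro m hm
    rw [hg1def]
    exact if_pos hm
  have t2 : ∑' m, g2 m ≤ Real.exp (-u) * ∏ p ∈ (y+1).primesBelow, (1 - (p:ℝ) ^ (σ-1))⁻¹ := by
    calc ∑' m, g2 m ≤ ∑' m, Real.exp (-u) * (Nat.smoothNumbers (y+1)).indicator (fun m => (m:ℝ) ^ (σ-1)) m := by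
          apply hsum_g2.tsum_le_tsum hg2_le
          exact ((hsum_ind (σ-1) hc).mul_left _)
      _ = Real.exp (-u) * ∑' m, (Nat.smoothNumbers (y+1)).indicator (fun m => (m:ℝ) ^ (σ-1)) m := tsum_mul_left
      _ = _ := by rw [euler_tsum hc (y+1)]
  have total : ∑' m, g m ≤ (∑ m ∈ Finset.Icc 1 M, a m / m)
      + Real.exp (-u) * ∏ p ∈ (y+1).primesBelow, (1 - (p:ℝ) ^ (σ-1))⁻¹ := by
    calc ∑' m, g m ≤ ∑' m, (g1 m + g2 m) := hsum_g.tsum_le_tsum hg_le (hsum_g1.add hsum_g2)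
      _ = (∑' m, g1 m) + ∑' m, g2 m := hsum_g1.tsum_add hsum_g2
      _ ≤ _ := by rw [t1]; linarith [t2]
  -- combine
  have head : Pn * (∑ m ∈ Finset.Icc 1 M, a m / m)
      ≤ u * ((1/Real.log M) * ∑ m ∈ Finset.Icc 1 M, a m / m) := by
    have hsnn : 0 ≤ ∑ m ∈ Finset.Icc 1 M, a m / m :=
      Finset.sum_nonneg fun m _ => div_nonneg (ha m).1 (Nat.cast_nonneg m)
    have hPM : Pn * Real.log M ≤ u := by
      calc Pn * Real.log M ≤ Pn * (u * L) := mul_le_mul_of_nonneg_left hlogM hPn0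
        _ = u * (Pn * L) := by ring
        _ ≤ u * 1 := by
            apply mul_le_mul_of_nonneg_left (PnL_le_one (by omega)) (by linarith)
        _ = u := mul_one u
    have heq : Pn * (∑ m ∈ Finset.Icc 1 M, a m / m)
        = (Pn * Real.log M) * ((1/Real.log M) * ∑ m ∈ Finset.Icc 1 M, a m / m) := by
      field_simp
    rw [heq]
    apply mul_le_mul_of_nonneg_right hPM
    positivity
  have tail : Pn * (Real.exp (-u) * ∏ p ∈ (y+1).primesBelow, (1 - (p:ℝ) ^ (σ-1))⁻¹)
      ≤ Real.exp 26 * Real.exp (-u) := by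
    have hQinv0 : 0 ≤ ∏ p ∈ (y+1).primesBelow, (1 - (p:ℝ) ^ (σ-1))⁻¹ :=
      Finset.prod_nonneg fun p hp =>
        (inv_pos.mpr (one_sub_pos_of_prime (Nat.prime_of_mem_primesBelow hp) hc)).le
    calc Pn * (Real.exp (-u) * ∏ p ∈ (y+1).primesBelow, (1 - (p:ℝ) ^ (σ-1))⁻¹)
        ≤ (Real.exp 26 * ∏ p ∈ (y+1).primesBelow, (1 - (p:ℝ)^(σ-1)))
            * (Real.exp (-u) * ∏ p ∈ (y+1).primesBelow, (1 - (p:ℝ) ^ (σ-1))⁻¹) := by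
          apply mul_le_mul_of_nonneg_right _ (by positivity)
          rw [hPdef, hσdef, hLdef]
          exact prod_bound hy
      _ = Real.exp 26 * Real.exp (-u)
            * ((∏ p ∈ (y+1).primesBelow, (1 - (p:ℝ)^(σ-1)))
              * ∏ p ∈ (y+1).primesBelow, (1 - (p:ℝ) ^ (σ-1))⁻¹) := by ring
      _ = Real.exp 26 * Real.exp (-u) := by rw [prod_mul_inv_prod hc (y+1), mul_one]
  calc Pn * (∑' m, g m)
      ≤ Pn * ((∑ m ∈ Finset.Icc 1 M, a m / m)
          + Real.exp (-u) * ∏ p ∈ (y+1).primesBelow, (1 - (p:ℝ) ^ (σ-1))⁻¹) :=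
        mul_le_mul_of_nonneg_left total hPn0
    _ = Pn * (∑ m ∈ Finset.Icc 1 M, a m / m)
          + Pn * (Real.exp (-u) * ∏ p ∈ (y+1).primesBelow, (1 - (p:ℝ) ^ (σ-1))⁻¹) := by ring
    _ ≤ _ := by
        apply add_le_add head tail

end SmoothHelpers

theorem smooth_partial_sum_tendsto_zero (a : ℕ → ℝ)
    (ha : ∀ m, 0 ≤ a m ∧ a m ≤ 1)
    (h : Tendsto (fun n : ℕ => (1 / Real.log n) * ∑ m ∈ Finset.Icc 1 n, a m / m)
      atTop (nhds 0)) :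
    Tendsto (fun n : ℕ =>
        (∏ p ∈ (Finset.range (Nat.nth Nat.Prime n + 1)).filter Nat.Prime,
            (1 - 1 / (p : ℝ))) *
          ∑' m : smoothNums n, a m / (m : ℝ))
      atTop (nhds 0) := by
  rw [NormedAddCommGroup.tendsto_nhds_zero]
  intro δ hδ
  set u : ℝ := max 1 (27 - Real.log (δ/2)) with hudef
  have hu1 : 1 ≤ u := le_max_left _ _
  have hu0 : 0 < u := by linarith
  have hutail : Real.exp 26 * Real.exp (-u) < δ/2 := by
    rw [← Real.exp_add]
    have h1 : 26 + -u ≤ -1 + Real.log (δ/2) := by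
      have := le_max_right 1 (27 - Real.log (δ/2)); linarith
    calc Real.exp (26 + -u) ≤ Real.exp (-1 + Real.log (δ/2)) := Real.exp_le_exp.mpr h1
      _ = Real.exp (-1) * (δ/2) := by rw [Real.exp_add, Real.exp_log (by linarith)]
      _ < 1 * (δ/2) := by
          apply mul_lt_mul_of_pos_right _ (by linarith)
          rw [Real.exp_lt_one_iff]
          norm_num
      _ = δ/2 := one_mul _
  set Y : ℕ → ℕ := fun n => Nat.nth Nat.Prime n with hYdef
  have hYmono : StrictMono Y := Nat.nth_strictMono Nat.infinite_setOf_prime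
  have hYn : ∀ n, n ≤ Y n := fun n => hYmono.le_apply
  have hY2 : ∀ n, 2 ≤ Y n := fun n => (Nat.prime_nth_prime n).two_le
  set Mf : ℕ → ℕ := fun n => ⌊Real.exp (u * Real.log (Y n))⌋₊ with hMdef
  have hMn : ∀ n, n ≤ Mf n := by
    intro n
    refine le_trans (hYn n) (Nat.le_floor ?_)
    have hy0 : (1:ℝ) ≤ (Y n : ℝ) := by exact_mod_cast (hY2 n).trans' (by norm_num)
    calc (Y n : ℝ) = Real.exp (Real.log (Y n)) := (Real.exp_log (by linarith)).symm
      _ ≤ Real.exp (u * Real.log (Y n)) := by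
          apply Real.exp_le_exp.mpr
          nlinarith [Real.log_nonneg hy0]
  have hMtend : Tendsto Mf atTop atTop := tendsto_atTop_mono hMn tendsto_id
  have hεtend := h.comp hMtend
  rw [NormedAddCommGroup.tendsto_nhds_zero] at hεtend
  have hev1 := hεtend ((δ/2)/u) (by positivity)
  filter_upwards [hev1, eventually_ge_atTop 32] with n h1 h2
  have hy32 : 32 ≤ Y n := le_trans h2 (hYn n)
  -- identify sets
  have hset : smoothNums n = Nat.smoothNumbers (Y n + 1) := by
    ext m
    constructor
    · rintro ⟨hm0, hm⟩
      rw [Nat.mem_smoothNumbers']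
      intro p hp hpm
      exact Nat.lt_succ_of_le (hm p hp hpm)
    · intro hm
      refine ⟨Nat.pos_of_ne_zero hm.1, fun p hp hpm => ?_⟩
      exact Nat.lt_succ_iff.mp (Nat.mem_smoothNumbers'.mp hm p hp hpm)
  have htsum : ∑' m : smoothNums n, a m / (m:ℝ)
      = ∑' m, (Nat.smoothNumbers (Y n + 1)).indicator (fun m => a m / m) m := by
    rw [hset]
    exact _root_.tsum_subtype (Nat.smoothNumbers (Y n + 1)) (fun m : ℕ => a m / (m:ℝ))
  have hprodeq : (Finset.range (Nat.nth Nat.Prime n + 1)).filter Nat.Prime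
      = Nat.primesBelow (Y n + 1) := rfl
  rw [htsum, hprodeq]
  have key := main_est a ha hu1 (y := Y n) hy32
  -- nonnegativity
  have hPn0 : 0 ≤ ∏ p ∈ Nat.primesBelow (Y n + 1), (1 - 1/(p:ℝ)) := by
    apply Finset.prod_nonneg
    intro p hp
    have h2' : (2:ℝ) ≤ (p:ℝ) := by exact_mod_cast (Nat.prime_of_mem_primesBelow hp).two_le
    have : 1/(p:ℝ) ≤ 1 := by rw [div_le_one (by linarith)]; linarith
    linarith
  have hS0 : 0 ≤ ∑' m, (Nat.smoothNumbers (Y n + 1)).indicator (fun m => a m / m) m := by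
    apply tsum_nonneg
    intro m
    apply Set.indicator_nonneg
    intro m' _
    exact div_nonneg (ha m').1 (Nat.cast_nonneg m')
  have hT0 : 0 ≤ (∏ p ∈ Nat.primesBelow (Y n + 1), (1 - 1/(p:ℝ)))
      * ∑' m, (Nat.smoothNumbers (Y n + 1)).indicator (fun m => a m / m) m :=
    mul_nonneg hPn0 hS0
  rw [Real.norm_eq_abs, abs_of_nonneg hT0]
  -- head bound from h1
  have hhead : u * ((1/Real.log (Mf n : ℕ))
      * ∑ m ∈ Finset.Icc 1 (Mf n), a m / m) < δ/2 := by
    have habs : |(1/Real.log (Mf n : ℕ)) * ∑ m ∈ Finset.Icc 1 (Mf n), a m / m| < (δ/2)/u := by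
      have h1' := h1
      rw [Function.comp_apply, Real.norm_eq_abs] at h1'
      exact h1'
    calc u * ((1/Real.log (Mf n : ℕ)) * ∑ m ∈ Finset.Icc 1 (Mf n), a m / m)
        ≤ u * |(1/Real.log (Mf n : ℕ)) * ∑ m ∈ Finset.Icc 1 (Mf n), a m / m| :=
          mul_le_mul_of_nonneg_left (le_abs_self _) hu0.le
      _ < u * ((δ/2)/u) := mul_lt_mul_of_pos_left habs hu0
      _ = δ/2 := by field_simp
  calc (∏ p ∈ Nat.primesBelow (Y n + 1), (1 - 1/(p:ℝ)))
      * ∑' m, (Nat.smoothNumbers (Y n + 1)).indicator (fun m => a m / m) m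
      ≤ u * ((1/Real.log (Mf n : ℕ)) * ∑ m ∈ Finset.Icc 1 (Mf n), a m / m)
        + Real.exp 26 * Real.exp (-u) := key
    _ < δ/2 + δ/2 := add_lt_add hhead hutail
    _ = δ := by ring
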